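/- With conductances C^{n,p} from the discretization of k, and α₀ = sup_x ∫_{{k_s(x,·)≠0}} k_a(x,y)²/k_s(x,y) dy < ∞, the discrete quantities α₀ⁿ = sup_a Σ_{b : C^{n,p}_s(a,b)≠0} C^{n,p}_a(a,b)²/C^{n,p}_s(a,b) satisfy α₀ⁿ ≤ α₀ for every n; in particular limsup_n α₀ⁿ ≤ α₀. -/

import Mathlib

open MeasureTheory Filter Topology
open scoped ENNReal NNReal Pointwise

noncomputable section

abbrev Eucl (d : ℕ) := EuclideanSpace ℝ (Fin d)

/-- The point of `ℝ^d` corresponding to the lattice point `a/n`, `a ∈ ℤ^d`. -/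
def latticePt (d n : ℕ) (a : Fin d → ℤ) : Eucl d := WithLp.toLp 2 (fun i => (a i : ℝ) / n)

/-- The half-open cube of side `1/n` centred at the lattice point `a/n`. -/
def cube (d n : ℕ) (a : Fin d → ℤ) : Set (Eucl d) :=
  {x | ∀ i, (a i : ℝ)/n - 1/(2*n) ≤ x i ∧ x i < (a i : ℝ)/n + 1/(2*n)}

/-- `[x]_n`: the index of the lattice point of `(1/n)ℤ^d` nearest to `x`. -/
def lattOf (d n : ℕ) (x : Eucl d) : Fin d → ℤ := fun i => ⌊n * x i + 1/2⌋

/-- The discretised conductances `C^{n,p}(a,b) = n^d ∫_{ā}∫_{b̄} k(x,y) dx dy` for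
`|a−b| > 2√d/n^p` and `0` otherwise. -/
def Cnp (d n : ℕ) (p : ℝ) (k : Eucl d → Eucl d → ℝ) (a b : Fin d → ℤ) : ℝ :=
  if ‖latticePt d n a - latticePt d n b‖ > 2 * Real.sqrt d / (n : ℝ) ^ p then
    (n : ℝ) ^ d * ∫ x in cube d n a, ∫ y in cube d n b, k x y
  else 0

/-- Symmetric part of the discretised conductances. -/
def CnpS (d n : ℕ) (p : ℝ) (k : Eucl d → Eucl d → ℝ) (a b : Fin d → ℤ) : ℝ :=
  (Cnp d n p k a b + Cnp d n p k b a) / 2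

/-- Antisymmetric part of the discretised conductances. -/
def CnpA (d n : ℕ) (p : ℝ) (k : Eucl d → Eucl d → ℝ) (a b : Fin d → ℤ) : ℝ :=
  (Cnp d n p k a b - Cnp d n p k b a) / 2

/-- The discrete non-symmetry quantity
`α₀ⁿ = sup_a ∑_{b : C^{n,p}_s(a,b) ≠ 0} C^{n,p}_a(a,b)² / C^{n,p}_s(a,b)`. -/
def alpha0n (d n : ℕ) (p : ℝ) (k : Eucl d → Eucl d → ℝ) : ℝ≥0∞ :=
  ⨆ a : Fin d → ℤ, ∑' b : Fin d → ℤ,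
    ENNReal.ofReal
      (if CnpS d n p k a b ≠ 0 then (CnpA d n p k a b) ^ 2 / CnpS d n p k a b else 0)

/-- The non-symmetry quantity `α₀ = sup_x ∫_{k_s(x,·)≠0} k_a(x,y)²/k_s(x,y) dy`. -/
def alpha0 (d : ℕ) (ks ka : Eucl d → Eucl d → ℝ) : ℝ≥0∞ :=
  ⨆ x : Eucl d, ∫⁻ y,
    ENNReal.ofReal (if ks x y ≠ 0 then (ka x y) ^ 2 / ks x y else 0)


-- ==================== auxiliary lemmas ====================

lemma cube_eq (d n : ℕ) (a : Fin d → ℤ) :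
    cube d n a = ((MeasurableEquiv.toLp 2 (Fin d → ℝ)).symm) ⁻¹'
      (Set.univ.pi fun i => Set.Ico ((a i : ℝ)/n - 1/(2*n)) ((a i : ℝ)/n + 1/(2*n))) := by
  ext x
  simp [cube, Set.mem_pi, Set.mem_Ico, MeasurableEquiv.coe_toLp_symm]

lemma measurableSet_cube (d n : ℕ) (a : Fin d → ℤ) : MeasurableSet (cube d n a) := by
  rw [cube_eq]
  exact ((MeasurableEquiv.toLp 2 (Fin d → ℝ)).symm).measurable
    (MeasurableSet.univ_pi fun i => measurableSet_Ico)

lemma volume_cube (d : ℕ) {n : ℕ} (hn : 0 < n) (a : Fin d → ℤ) :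
    volume (cube d n a) = ((n : ℝ≥0∞)⁻¹) ^ d := by
  rw [cube_eq, (EuclideanSpace.volume_preserving_symm_measurableEquiv_toLp (Fin d)).measure_preimage
    (MeasurableSet.univ_pi fun i => measurableSet_Ico).nullMeasurableSet]
  rw [volume_pi_pi]
  have hn' : (0:ℝ) < n := Nat.cast_pos.2 hn
  have : ∀ i : Fin d, volume (Set.Ico ((a i : ℝ)/n - 1/(2*n)) ((a i : ℝ)/n + 1/(2*n)))
      = (n : ℝ≥0∞)⁻¹ := by
    intro i
    rw [Real.volume_Ico]
    have : (a i : ℝ)/n + 1/(2*n) - ((a i : ℝ)/n - 1/(2*n)) = (n:ℝ)⁻¹ := by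
      field_simp; ring
    rw [this, ← ENNReal.ofReal_natCast n, ← ENNReal.ofReal_inv_of_pos hn']
  simp only [this, Finset.prod_const, Finset.card_univ, Fintype.card_fin]

lemma cube_disjoint (d : ℕ) {n : ℕ} (hn : 0 < n) :
    Pairwise (Function.onFun Disjoint fun a : Fin d → ℤ => cube d n a) := by
  intro a b hab
  rw [Function.onFun, Set.disjoint_left]
  intro x hxa hxb
  apply hab
  funext i
  have hn' : (0:ℝ) < n := Nat.cast_pos.2 hn
  have key : ∀ c : Fin d → ℤ, x ∈ cube d n c → c i = ⌊(n:ℝ) * x i + 1/2⌋ := by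
    intro c hc
    obtain ⟨h1, h2⟩ := hc i
    symm
    rw [Int.floor_eq_iff]
    constructor
    · have := mul_le_mul_of_nonneg_left h1 hn'.le
      rw [mul_sub, mul_div_cancel₀ _ hn'.ne'] at this
      have h2n : (n:ℝ) * (1/(2*n)) = 1/2 := by field_simp
      rw [h2n] at this
      push_cast
      linarith
    · have := mul_lt_mul_of_pos_left h2 hn'
      rw [mul_add, mul_div_cancel₀ _ hn'.ne'] at this
      have h2n : (n:ℝ) * (1/(2*n)) = 1/2 := by field_simp
      rw [h2n] at this
      push_cast
      linarith
  rw [key a hxa, key b hxb]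

lemma cs_abstract {α : Type*} [MeasurableSpace α] (π : Measure α) (g h : α → ℝ)
    (hg : Measurable g) (hh : Measurable h) (hg0 : ∀ z, 0 ≤ g z)
    (habs : ∀ z, |h z| ≤ g z) (hgi : Integrable g π) :
    ENNReal.ofReal ((∫ z, h z ∂π) ^ 2 / (∫ z, g z ∂π)) ≤
      ∫⁻ z, ENNReal.ofReal (if g z ≠ 0 then h z ^ 2 / g z else 0) ∂π := by
  set f : α → ℝ := fun z => if g z ≠ 0 then h z ^ 2 / g z else 0 with hf
  have hf0 : ∀ z, 0 ≤ f z := by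
    intro z; simp only [hf]
    split
    · exact div_nonneg (sq_nonneg _) (hg0 z)
    · exact le_refl 0
  have hgpos : ∀ z, g z ≠ 0 → 0 < g z := fun z hz => lt_of_le_of_ne (hg0 z) (Ne.symm hz)
  have hh0 : ∀ z, g z = 0 → h z = 0 := by
    intro z hz
    have := habs z; rw [hz] at this
    exact abs_eq_zero.mp (le_antisymm this (abs_nonneg _))
  have hfg : ∀ z, f z ≤ g z := by
    intro z; simp only [hf]
    split
    · next hz =>
      rw [div_le_iff₀ (hgpos z hz)]
      calc h z ^ 2 = |h z| ^ 2 := (sq_abs _).symm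
        _ ≤ g z * g z := by rw [← sq]; exact pow_le_pow_left₀ (abs_nonneg _) (habs z) 2
    · exact hg0 z
  have hfm : Measurable f := by
    apply Measurable.ite _ ((hh.pow_const 2).div hg) measurable_const
    exact (hg (measurableSet_singleton 0)).compl
  have hfi : Integrable f π := hgi.mono' hfm.aestronglyMeasurable
    (ae_of_all _ fun z => by rw [Real.norm_eq_abs, abs_of_nonneg (hf0 z)]; exact hfg z)
  have hhi : Integrable h π := hgi.mono' hh.aestronglyMeasurable
    (ae_of_all _ fun z => by rw [Real.norm_eq_abs]; exact habs z)
  set Ls := ∫⁻ z, ENNReal.ofReal (g z) ∂π with hLsdef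
  set LF := ∫⁻ z, ENNReal.ofReal (f z) ∂π with hLFdef
  set LA := ∫⁻ z, ENNReal.ofReal |h z| ∂π with hLAdef
  have hLs : Ls = ENNReal.ofReal (∫ z, g z ∂π) :=
    (ofReal_integral_eq_lintegral_ofReal hgi (ae_of_all _ hg0)).symm
  have hLF : LF = ENNReal.ofReal (∫ z, f z ∂π) :=
    (ofReal_integral_eq_lintegral_ofReal hfi (ae_of_all _ hf0)).symm
  have hLA : LA = ENNReal.ofReal (∫ z, |h z| ∂π) :=
    (ofReal_integral_eq_lintegral_ofReal hhi.abs (ae_of_all _ fun z => abs_nonneg _)).symm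
  have hpt : ∀ z, ENNReal.ofReal |h z| =
      (ENNReal.ofReal (g z)) ^ ((1:ℝ)/2) * (ENNReal.ofReal (f z)) ^ ((1:ℝ)/2) := by
    intro z
    by_cases hz : g z = 0
    · have hhz := hh0 z hz
      have hfz : f z = 0 := by simp [hf, hz]
      simp [hz, hhz, hfz, ENNReal.zero_rpow_of_pos (by norm_num : (0:ℝ) < 1/2)]
    · rw [ENNReal.ofReal_rpow_of_nonneg (hg0 z) (by norm_num),
        ENNReal.ofReal_rpow_of_nonneg (hf0 z) (by norm_num),
        ← ENNReal.ofReal_mul (Real.rpow_nonneg (hg0 z) _)]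
      congr 1
      rw [← Real.sqrt_eq_rpow, ← Real.sqrt_eq_rpow]
      have hfz : f z = h z ^ 2 / g z := by simp [hf, hz]
      rw [hfz, Real.sqrt_div (sq_nonneg _), Real.sqrt_sq_eq_abs]
      rw [mul_comm, div_mul_cancel₀]
      exact Real.sqrt_ne_zero'.mpr (hgpos z hz)
  have hconj : Real.HolderConjugate 2 2 := Real.holderConjugate_iff.mpr ⟨one_lt_two, by norm_num⟩
  have hCS : LA ≤ Ls ^ ((1:ℝ)/2) * LF ^ ((1:ℝ)/2) := by
    have := ENNReal.lintegral_mul_le_Lp_mul_Lq π hconj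
      (f := fun z => (ENNReal.ofReal (g z)) ^ ((1:ℝ)/2))
      (g := fun z => (ENNReal.ofReal (f z)) ^ ((1:ℝ)/2))
      ((ENNReal.measurable_ofReal.comp hg).pow_const _).aemeasurable
      ((ENNReal.measurable_ofReal.comp hfm).pow_const _).aemeasurable
    calc LA = ∫⁻ z, ((fun z => (ENNReal.ofReal (g z)) ^ ((1:ℝ)/2)) *
          (fun z => (ENNReal.ofReal (f z)) ^ ((1:ℝ)/2))) z ∂π := by
          rw [hLAdef]; exact lintegral_congr fun z => by simpa using hpt z
      _ ≤ (∫⁻ z, ((ENNReal.ofReal (g z)) ^ ((1:ℝ)/2)) ^ (2:ℝ) ∂π) ^ ((1:ℝ)/2) *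
          (∫⁻ z, ((ENNReal.ofReal (f z)) ^ ((1:ℝ)/2)) ^ (2:ℝ) ∂π) ^ ((1:ℝ)/2) := this
      _ = Ls ^ ((1:ℝ)/2) * LF ^ ((1:ℝ)/2) := by
          have e : ∀ x : ℝ≥0∞, (x ^ ((1:ℝ)/2)) ^ (2:ℝ) = x := fun x => by
            rw [← ENNReal.rpow_mul]; norm_num
          simp only [e, hLsdef, hLFdef]
  have hsq : LA ^ (2:ℝ) ≤ Ls * LF := by
    calc LA ^ (2:ℝ) ≤ (Ls ^ ((1:ℝ)/2) * LF ^ ((1:ℝ)/2)) ^ (2:ℝ) :=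
          ENNReal.rpow_le_rpow hCS (by norm_num)
      _ = Ls * LF := by
          rw [ENNReal.mul_rpow_of_nonneg _ _ (by norm_num), ← ENNReal.rpow_mul,
            ← ENNReal.rpow_mul]
          norm_num
  have hkey : (∫ z, h z ∂π) ^ 2 ≤ (∫ z, g z ∂π) * (∫ z, f z ∂π) := by
    have h1 : |∫ z, h z ∂π| ≤ ∫ z, |h z| ∂π := by
      simpa [Real.norm_eq_abs] using norm_integral_le_integral_norm (μ := π) h
    have h2 : ENNReal.ofReal ((∫ z, |h z| ∂π) ^ 2) ≤
        ENNReal.ofReal ((∫ z, g z ∂π) * (∫ z, f z ∂π)) := by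
      calc ENNReal.ofReal ((∫ z, |h z| ∂π) ^ 2) = LA ^ (2:ℝ) := by
            rw [hLA, ENNReal.ofReal_rpow_of_nonneg (integral_nonneg fun z => abs_nonneg _)
              (by norm_num)]
            norm_num
        _ ≤ Ls * LF := hsq
        _ = ENNReal.ofReal ((∫ z, g z ∂π) * (∫ z, f z ∂π)) := by
            rw [hLs, hLF, ← ENNReal.ofReal_mul (integral_nonneg fun z => hg0 z)]
    have h3 : (∫ z, |h z| ∂π) ^ 2 ≤ (∫ z, g z ∂π) * (∫ z, f z ∂π) :=
      (ENNReal.ofReal_le_ofReal_iff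
        (mul_nonneg (integral_nonneg fun z => hg0 z) (integral_nonneg fun z => hf0 z))).mp h2
    calc (∫ z, h z ∂π) ^ 2 = |∫ z, h z ∂π| ^ 2 := (sq_abs _).symm
      _ ≤ (∫ z, |h z| ∂π) ^ 2 := pow_le_pow_left₀ (abs_nonneg _) h1 2
      _ ≤ _ := h3
  rw [hLF]
  by_cases hJ : (∫ z, g z ∂π) = 0
  · rw [hJ, div_zero]
    simp
  · have hJpos : 0 < ∫ z, g z ∂π := lt_of_le_of_ne (integral_nonneg fun z => hg0 z) (Ne.symm hJ)
    apply ENNReal.ofReal_le_ofReal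
    rw [div_le_iff₀ hJpos]
    calc (∫ z, h z ∂π) ^ 2 ≤ (∫ z, g z ∂π) * (∫ z, f z ∂π) := hkey
      _ = (∫ z, f z ∂π) * (∫ z, g z ∂π) := mul_comm _ _

lemma key_pair (d : ℕ) {n : ℕ} (hn : 0 < n) (p : ℝ)
    (k : Eucl d → Eucl d → ℝ) (hk0 : ∀ x y, 0 ≤ k x y)
    (hkm : Measurable (Function.uncurry k))
    (hint : ∀ (a b : Fin d → ℤ),
      IntegrableOn (Function.uncurry k) (cube d n a ×ˢ cube d n b) volume)
    (ks ka : Eucl d → Eucl d → ℝ)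
    (hks : ∀ x y, ks x y = (k x y + k y x) / 2)
    (hka : ∀ x y, ka x y = (k x y - k y x) / 2)
    (a b : Fin d → ℤ) :
    ENNReal.ofReal (if CnpS d n p k a b ≠ 0 then CnpA d n p k a b ^ 2 / CnpS d n p k a b else 0)
      ≤ (n : ℝ≥0∞) ^ d * ∫⁻ z in cube d n a ×ˢ cube d n b,
          ENNReal.ofReal (if ks z.1 z.2 ≠ 0 then ka z.1 z.2 ^ 2 / ks z.1 z.2 else 0) := by
  by_cases hS : CnpS d n p k a b = 0
  · simp [hS]
  rw [if_pos hS]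
  set π : Measure (Eucl d × Eucl d) := volume.restrict (cube d n a ×ˢ cube d n b) with hπdef
  have hπ : π = (volume.restrict (cube d n a)).prod (volume.restrict (cube d n b)) := by
    rw [hπdef, Measure.prod_restrict, ← Measure.volume_eq_prod]
  have hπ' : (volume : Measure (Eucl d × Eucl d)).restrict (cube d n b ×ˢ cube d n a)
      = (volume.restrict (cube d n b)).prod (volume.restrict (cube d n a)) := by
    rw [Measure.prod_restrict, ← Measure.volume_eq_prod]
  have hcond : ‖latticePt d n a - latticePt d n b‖ > 2 * Real.sqrt d / (n:ℝ)^p := by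
    by_contra hc
    apply hS
    have h1 : Cnp d n p k a b = 0 := by rw [Cnp, if_neg hc]
    have h2 : Cnp d n p k b a = 0 := by
      rw [Cnp, if_neg]
      rwa [norm_sub_rev]
    rw [CnpS, h1, h2]
    norm_num
  have hcond' : ‖latticePt d n b - latticePt d n a‖ > 2 * Real.sqrt d / (n:ℝ)^p := by
    rwa [norm_sub_rev]
  have hab : Integrable (Function.uncurry k) π := hint a b
  have hswp : MeasurePreserving (Prod.swap : Eucl d × Eucl d → Eucl d × Eucl d)
      π (volume.restrict (cube d n b ×ˢ cube d n a)) := by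
    rw [hπ, hπ']
    exact Measure.measurePreserving_swap
  have hemb : MeasurableEmbedding (Prod.swap : Eucl d × Eucl d → Eucl d × Eucl d) :=
    (MeasurableEquiv.prodComm : (Eucl d × Eucl d) ≃ᵐ Eucl d × Eucl d).measurableEmbedding
  have hba : Integrable (Function.uncurry k ∘ Prod.swap) π :=
    (hswp.integrable_comp_emb hemb).mpr (hint b a)
  have hI1 : Cnp d n p k a b = (n:ℝ)^d * ∫ z, Function.uncurry k z ∂π := by
    rw [Cnp, if_pos hcond]
    congr 1
    rw [hπ, integral_prod _ (hπ ▸ hab)]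
    rfl
  have hI2 : Cnp d n p k b a = (n:ℝ)^d * ∫ z, (Function.uncurry k ∘ Prod.swap) z ∂π := by
    rw [Cnp, if_pos hcond']
    congr 1
    calc ∫ x in cube d n b, ∫ y in cube d n a, k x y
        = ∫ z, Function.uncurry k z ∂(volume.restrict (cube d n b ×ˢ cube d n a)) := by
          rw [hπ', integral_prod _ (hπ' ▸ hint b a)]
          rfl
      _ = ∫ z, (Function.uncurry k ∘ Prod.swap) z ∂π :=
          (hswp.integral_comp hemb _).symm
  have hksfun : (fun z : Eucl d × Eucl d => ks z.1 z.2)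
      = fun z => (Function.uncurry k z + (Function.uncurry k ∘ Prod.swap) z) / 2 :=
    funext fun z => hks z.1 z.2
  have hkafun : (fun z : Eucl d × Eucl d => ka z.1 z.2)
      = fun z => (Function.uncurry k z - (Function.uncurry k ∘ Prod.swap) z) / 2 :=
    funext fun z => hka z.1 z.2
  set Js := ∫ z, (fun z : Eucl d × Eucl d => ks z.1 z.2) z ∂π with hJsdef
  set Ja := ∫ z, (fun z : Eucl d × Eucl d => ka z.1 z.2) z ∂π with hJadef
  have hSval : CnpS d n p k a b = (n:ℝ)^d * Js := by
    rw [CnpS, hI1, hI2, hJsdef, hksfun]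
    simp only [integral_div, integral_add hab hba]
    ring
  have hAval : CnpA d n p k a b = (n:ℝ)^d * Ja := by
    rw [CnpA, hI1, hI2, hJadef, hkafun]
    simp only [integral_div, integral_sub hab hba]
    ring
  have hmks : Measurable (fun z : Eucl d × Eucl d => ks z.1 z.2) := by
    rw [hksfun]
    exact (hkm.add (hkm.comp measurable_swap)).div_const 2
  have hmka : Measurable (fun z : Eucl d × Eucl d => ka z.1 z.2) := by
    rw [hkafun]
    exact (hkm.sub (hkm.comp measurable_swap)).div_const 2
  have hks0 : ∀ z : Eucl d × Eucl d, 0 ≤ (fun z : Eucl d × Eucl d => ks z.1 z.2) z := by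
    intro z
    simp only
    rw [hks]
    have h1 := hk0 z.1 z.2; have h2 := hk0 z.2 z.1
    linarith
  have habs : ∀ z : Eucl d × Eucl d,
      |(fun z : Eucl d × Eucl d => ka z.1 z.2) z| ≤ (fun z : Eucl d × Eucl d => ks z.1 z.2) z := by
    intro z
    simp only
    rw [hka, hks]
    have h1 := hk0 z.1 z.2; have h2 := hk0 z.2 z.1
    rw [abs_le]
    constructor <;> linarith
  have hksint : Integrable (fun z : Eucl d × Eucl d => ks z.1 z.2) π := by
    rw [hksfun]
    exact (hab.add hba).div_const 2
  have hnd : (0:ℝ) < (n:ℝ)^d := pow_pos (Nat.cast_pos.2 hn) d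
  have hJsne : Js ≠ 0 := fun h => hS (by rw [hSval, h, mul_zero])
  have harith : CnpA d n p k a b ^ 2 / CnpS d n p k a b = (n:ℝ)^d * (Ja^2/Js) := by
    rw [hAval, hSval]
    field_simp
  rw [harith, ENNReal.ofReal_mul (le_of_lt hnd), ENNReal.ofReal_pow (Nat.cast_nonneg n),
    ENNReal.ofReal_natCast]
  exact mul_le_mul_right (cs_abstract π _ _ hmks hmka hks0 habs hksint) _

/-- For the discretised conductances of a kernel `k` with `α₀ < ∞`, one has
`α₀ⁿ ≤ α₀` for every `n`; in particular `limsup_n α₀ⁿ ≤ α₀`. -/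
theorem discrete_alpha_le_alpha (d : ℕ) (p : ℝ) (hp : 0 < p) (hp1 : p ≤ 1)
    (k : Eucl d → Eucl d → ℝ) (hk0 : ∀ x y, 0 ≤ k x y)
    (hkm : Measurable (Function.uncurry k))
    (hint : ∀ (n : ℕ) (a b : Fin d → ℤ),
      IntegrableOn (Function.uncurry k) (cube d n a ×ˢ cube d n b) volume)
    (ks ka : Eucl d → Eucl d → ℝ)
    (hks : ∀ x y, ks x y = (k x y + k y x) / 2)
    (hka : ∀ x y, ka x y = (k x y - k y x) / 2)
    (hα : alpha0 d ks ka < ∞) :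
    (∀ n : ℕ, 0 < n → alpha0n d n p k ≤ alpha0 d ks ka) ∧
      limsup (fun n : ℕ => alpha0n d n p k) atTop ≤ alpha0 d ks ka := by
  have main : ∀ n : ℕ, 0 < n → alpha0n d n p k ≤ alpha0 d ks ka := by
    intro n hn
    unfold alpha0n
    apply iSup_le
    intro a
    have hmks : Measurable (fun z : Eucl d × Eucl d => ks z.1 z.2) := by
      have e : (fun z : Eucl d × Eucl d => ks z.1 z.2)
          = fun z => (Function.uncurry k z + (Function.uncurry k ∘ Prod.swap) z) / 2 :=
        funext fun z => hks z.1 z.2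
      rw [e]
      exact (hkm.add (hkm.comp measurable_swap)).div_const 2
    have hmka : Measurable (fun z : Eucl d × Eucl d => ka z.1 z.2) := by
      have e : (fun z : Eucl d × Eucl d => ka z.1 z.2)
          = fun z => (Function.uncurry k z - (Function.uncurry k ∘ Prod.swap) z) / 2 :=
        funext fun z => hka z.1 z.2
      rw [e]
      exact (hkm.sub (hkm.comp measurable_swap)).div_const 2
    have hmF : Measurable (fun z : Eucl d × Eucl d =>
        ENNReal.ofReal (if ks z.1 z.2 ≠ 0 then ka z.1 z.2 ^ 2 / ks z.1 z.2 else 0)) := by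
      apply ENNReal.measurable_ofReal.comp
      apply Measurable.ite _ ((hmka.pow_const 2).div hmks) measurable_const
      exact (hmks (measurableSet_singleton 0)).compl
    calc ∑' b, ENNReal.ofReal
          (if CnpS d n p k a b ≠ 0 then CnpA d n p k a b ^ 2 / CnpS d n p k a b else 0)
        ≤ ∑' b, (n : ℝ≥0∞) ^ d * ∫⁻ z in cube d n a ×ˢ cube d n b,
            ENNReal.ofReal (if ks z.1 z.2 ≠ 0 then ka z.1 z.2 ^ 2 / ks z.1 z.2 else 0) :=
          ENNReal.tsum_le_tsum fun b => key_pair d hn p k hk0 hkm (hint n) ks ka hks hka a b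
      _ = (n : ℝ≥0∞) ^ d * ∑' b, ∫⁻ x in cube d n a, ∫⁻ y in cube d n b,
            ENNReal.ofReal (if ks x y ≠ 0 then ka x y ^ 2 / ks x y else 0) := by
          rw [ENNReal.tsum_mul_left]
          congr 1
          apply tsum_congr
          intro b
          rw [show (volume : Measure (Eucl d × Eucl d)).restrict (cube d n a ×ˢ cube d n b)
              = (volume.restrict (cube d n a)).prod (volume.restrict (cube d n b)) from by
            rw [Measure.prod_restrict, ← Measure.volume_eq_prod]]
          exact lintegral_prod _ hmF.aemeasurable
      _ = (n : ℝ≥0∞) ^ d * ∫⁻ x in cube d n a, ∑' b, ∫⁻ y in cube d n b,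
            ENNReal.ofReal (if ks x y ≠ 0 then ka x y ^ 2 / ks x y else 0) := by
          congr 1
          exact (lintegral_tsum fun b =>
            (Measurable.lintegral_prod_right' (f := fun z : Eucl d × Eucl d =>
              ENNReal.ofReal (if ks z.1 z.2 ≠ 0 then ka z.1 z.2 ^ 2 / ks z.1 z.2 else 0))
              hmF).aemeasurable).symm
      _ ≤ (n : ℝ≥0∞) ^ d * ∫⁻ _ in cube d n a, alpha0 d ks ka := by
          apply mul_le_mul_right
          apply lintegral_mono
          intro x
          calc ∑' b, ∫⁻ y in cube d n b,
                ENNReal.ofReal (if ks x y ≠ 0 then ka x y ^ 2 / ks x y else 0)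
              = ∫⁻ y in ⋃ b, cube d n b,
                ENNReal.ofReal (if ks x y ≠ 0 then ka x y ^ 2 / ks x y else 0) :=
              (lintegral_iUnion (measurableSet_cube d n) (cube_disjoint d hn) _).symm
            _ ≤ ∫⁻ y, ENNReal.ofReal (if ks x y ≠ 0 then ka x y ^ 2 / ks x y else 0) :=
              setLIntegral_le_lintegral _ _
            _ ≤ alpha0 d ks ka :=
              le_iSup (fun x' => ∫⁻ y,
                ENNReal.ofReal (if ks x' y ≠ 0 then ka x' y ^ 2 / ks x' y else 0)) x
      _ = alpha0 d ks ka := by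
          rw [setLIntegral_const, volume_cube d hn a, mul_comm (alpha0 d ks ka), ← mul_assoc,
            ← mul_pow, ENNReal.mul_inv_cancel (Nat.cast_ne_zero.2 hn.ne')
              (ENNReal.natCast_ne_top n), one_pow, one_mul]
  refine ⟨main, ?_⟩
  exact Filter.limsup_le_of_le (by isBoundedDefault)
    (Filter.eventually_atTop.2 ⟨1, fun n hn => main n hn⟩)
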